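/- For all signs a, b ∈ {−1,1}, the Hadamard (componentwise) product of the tetrahedra T_a and T_b equals the tetrahedron T_{ab}: T_a ∘ T_b = T_{ab}. In particular T₋₁ ∘ T₋₁ = T₁, T₁ ∘ T₁ = T₁, and T₁ ∘ T₋₁ = T₋₁. -/

import Mathlib

open BigOperators

/-- The tetrahedron `T_s`: convex hull of `(1,s,1), (−1,−s,1), (1,−s,−1), (−1,s,−1)`. -/
noncomputable def tet (s : ℝ) : Set (Fin 3 → ℝ) :=
  convexHull ℝ {![1, s, 1], ![-1, -s, 1], ![1, -s, -1], ![-1, s, -1]}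

/-- Hadamard (componentwise) product of two subsets of ℝ³. -/
def hadSet (A B : Set (Fin 3 → ℝ)) : Set (Fin 3 → ℝ) :=
  {x | ∃ a ∈ A, ∃ b ∈ B, x = a * b}

private lemma mul3 (x y z x' y' z' : ℝ) :
    (![x, y, z] * ![x', y', z'] : Fin 3 → ℝ) = ![x * x', y * y', z * z'] := by
  funext i; fin_cases i <;> simp

private lemma mem_hull_mul {S : Set (Fin 3 → ℝ)} {p : Fin 3 → ℝ} (q : Fin 3 → ℝ)
    (hp : p ∈ convexHull ℝ S) : q * p ∈ convexHull ℝ ((q * ·) '' S) := by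
  have h := (LinearMap.mulLeft ℝ q).image_convexHull S
  have : q * p ∈ LinearMap.mulLeft ℝ q '' convexHull ℝ S := ⟨p, hp, rfl⟩
  rw [h] at this
  exact this

private lemma vset_mem₁ (s : ℝ) :
    ![(1:ℝ), s, 1] ∈ ({![1, s, 1], ![-1, -s, 1], ![1, -s, -1], ![-1, s, -1]} :
      Set (Fin 3 → ℝ)) := by left; rfl

/-- key vertex computation: each product of a vertex of `T_a` with a vertex of `T_b`
is a vertex of `T_{ab}`. -/
private lemma mul_vert_mem (a b : ℝ) {u w : Fin 3 → ℝ}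
    (hu : u ∈ ({![1, a, 1], ![-1, -a, 1], ![1, -a, -1], ![-1, a, -1]} : Set (Fin 3 → ℝ)))
    (hw : w ∈ ({![1, b, 1], ![-1, -b, 1], ![1, -b, -1], ![-1, b, -1]} : Set (Fin 3 → ℝ))) :
    u * w ∈ ({![1, a*b, 1], ![-1, -(a*b), 1], ![1, -(a*b), -1], ![-1, a*b, -1]} :
      Set (Fin 3 → ℝ)) := by
  simp only [Set.mem_insert_iff, Set.mem_singleton_iff] at hu hw ⊢
  rcases hu with rfl | rfl | rfl | rfl <;> rcases hw with rfl | rfl | rfl | rfl <;>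
    rw [mul3] <;> norm_num

theorem stmt7 (a b : ℝ) (ha : a = 1 ∨ a = -1) (hb : b = 1 ∨ b = -1) :
    hadSet (tet a) (tet b) = tet (a * b) := by
  have hb2 : b * b = 1 := by rcases hb with rfl | rfl <;> norm_num
  apply Set.Subset.antisymm
  · rintro x ⟨p, hp, q, hq, rfl⟩
    have h1 : q * p ∈ convexHull ℝ ((q * ·) ''
        ({![1, a, 1], ![-1, -a, 1], ![1, -a, -1], ![-1, a, -1]} : Set (Fin 3 → ℝ))) :=
      mem_hull_mul q hp
    have h2 : ((q * ·) ''
        ({![1, a, 1], ![-1, -a, 1], ![1, -a, -1], ![-1, a, -1]} : Set (Fin 3 → ℝ)))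
        ⊆ tet (a * b) := by
      rintro y ⟨u, hu, rfl⟩
      show q * u ∈ tet (a * b)
      have h3 : u * q ∈ convexHull ℝ ((u * ·) ''
          ({![1, b, 1], ![-1, -b, 1], ![1, -b, -1], ![-1, b, -1]} : Set (Fin 3 → ℝ))) :=
        mem_hull_mul u hq
      rw [mul_comm q u]
      refine convexHull_min ?_ (convex_convexHull ℝ _) h3
      rintro z ⟨w, hw, rfl⟩
      show u * w ∈ tet (a * b)
      exact subset_convexHull ℝ _ (mul_vert_mem a b hu hw)
    have : p * q = q * p := mul_comm p q
    rw [this]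
    exact convexHull_min h2 (convex_convexHull ℝ _) h1
  · intro x hx
    have hww : (![1, b, 1] * ![1, b, 1] : Fin 3 → ℝ) = 1 := by
      rw [mul3, hb2]
      funext i; fin_cases i <;> simp
    refine ⟨x * ![1, b, 1], ?_, ![1, b, 1], subset_convexHull ℝ _ (vset_mem₁ b), ?_⟩
    · -- x * ![1,b,1] ∈ tet a
      have h1 : (![1, b, 1] : Fin 3 → ℝ) * x ∈ convexHull ℝ (((![1, b, 1] : Fin 3 → ℝ) * ·) ''
          ({![1, a*b, 1], ![-1, -(a*b), 1], ![1, -(a*b), -1], ![-1, a*b, -1]} :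
            Set (Fin 3 → ℝ))) := mem_hull_mul _ hx
      rw [mul_comm x ![1, b, 1]]
      refine convexHull_min ?_ (convex_convexHull ℝ _) h1
      rintro z ⟨v, hv, rfl⟩
      show (![1, b, 1] : Fin 3 → ℝ) * v ∈ tet a
      apply subset_convexHull ℝ _
      simp only [Set.mem_insert_iff, Set.mem_singleton_iff] at hv
      simp only [tet] at *
      rcases hv with rfl | rfl | rfl | rfl
      · left
        rw [mul3]; funext i; fin_cases i <;> simp <;> linear_combination a * hb2
      · right; left
        rw [mul3]; funext i; fin_cases i <;> simp <;> linear_combination a * hb2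
      · right; right; left
        rw [mul3]; funext i; fin_cases i <;> simp <;> linear_combination a * hb2
      · right; right; right
        rw [mul3]; funext i; fin_cases i <;> simp <;> linear_combination a * hb2
    · rw [mul_assoc, hww, mul_one]
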